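/- The family PC(ℝ) of peripherally continuous functions has property B(2^𝔠, 𝔠): there exists a set 𝓑 of ℝ-linear subspaces of ℝ^ℝ with #𝓑 ≥ 𝔠 such that every B ∈ 𝓑 satisfies B ⊆ PC(ℝ) ∪ {0} and dim_ℝ B ≥ 2^𝔠, and PC(ℝ) ∪ {0} = ⋃ 𝓑. -/

import Mathlib

open Cardinal

/-- `f` is peripherally continuous: for every `x` and open sets `U ∋ x`, `V ∋ f x` there
is an open neighborhood `W` of `x` with `W ⊆ U` and `f(frontier W) ⊆ V`. -/
def IsPeripherallyContinuous (f : ℝ → ℝ) : Prop :=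
  ∀ x : ℝ, ∀ U V : Set ℝ, IsOpen U → IsOpen V → x ∈ U → f x ∈ V →
    ∃ W : Set ℝ, IsOpen W ∧ x ∈ W ∧ W ⊆ U ∧ f '' frontier W ⊆ V

namespace PCB

open Set Metric
open scoped Classical

/-- Two-sided approximation property of peripherally continuous functions. -/
lemma approx_of_pc {f : ℝ → ℝ} (hf : IsPeripherallyContinuous f) (x : ℝ) {ε δ : ℝ}
    (hε : 0 < ε) (hδ : 0 < δ) :
    (∃ a, x - δ ≤ a ∧ a < x ∧ |f a - f x| < ε) ∧
    (∃ b, x < b ∧ b ≤ x + δ ∧ |f b - f x| < ε) := by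
  obtain ⟨W, hWo, hxW, hWU, hWf⟩ := hf x (Ioo (x - δ) (x + δ)) (Ioo (f x - ε) (f x + ε))
    isOpen_Ioo isOpen_Ioo (by constructor <;> linarith) (by constructor <;> linarith)
  have hfr : ∀ y ∈ frontier W, |f y - f x| < ε := by
    intro y hy
    have := hWf ⟨y, hy, rfl⟩
    rw [abs_sub_lt_iff]
    exact ⟨by linarith [this.2], by linarith [this.1]⟩
  constructor
  · set T : Set ℝ := Icc (x - δ) x \ W with hT
    have hmem : x - δ ∈ T := by
      refine ⟨⟨le_refl _, by linarith⟩, fun hW => ?_⟩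
      have := (hWU hW).1; linarith
    have hTc : IsClosed T := by
      rw [hT, diff_eq]
      exact isClosed_Icc.inter hWo.isClosed_compl
    have hTb : BddAbove T := ⟨x, fun y hy => hy.1.2⟩
    set s := sSup T with hs
    have hsT : s ∈ T := hTc.csSup_mem ⟨_, hmem⟩ hTb
    have hsx : s < x := lt_of_le_of_ne hsT.1.2 (fun h => hsT.2 (h ▸ hxW))
    have hsub : Ioc s x ⊆ W := by
      intro y hy
      by_contra hyW
      have hyT : y ∈ T := ⟨⟨le_trans hsT.1.1 hy.1.le, hy.2⟩, hyW⟩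
      exact absurd (le_csSup hTb hyT) (not_le.2 hy.1)
    have hscl : s ∈ closure W := by
      refine closure_mono hsub ?_
      rw [closure_Ioc hsx.ne]
      exact ⟨le_refl _, hsx.le⟩
    have hsfr : s ∈ frontier W := by
      rw [frontier, hWo.interior_eq]
      exact ⟨hscl, hsT.2⟩
    exact ⟨s, hsT.1.1, hsx, hfr s hsfr⟩
  · set T : Set ℝ := Icc x (x + δ) \ W with hT
    have hmem : x + δ ∈ T := by
      refine ⟨⟨by linarith, le_refl _⟩, fun hW => ?_⟩
      have := (hWU hW).2; linarith
    have hTc : IsClosed T := by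
      rw [hT, diff_eq]
      exact isClosed_Icc.inter hWo.isClosed_compl
    have hTb : BddBelow T := ⟨x, fun y hy => hy.1.1⟩
    set s := sInf T with hs
    have hsT : s ∈ T := hTc.csInf_mem ⟨_, hmem⟩ hTb
    have hsx : x < s := lt_of_le_of_ne hsT.1.1 (fun h => hsT.2 (h ▸ hxW))
    have hsub : Ico x s ⊆ W := by
      intro y hy
      by_contra hyW
      have hyT : y ∈ T := ⟨⟨hy.1, le_trans hy.2.le hsT.1.2⟩, hyW⟩
      exact absurd (csInf_le hTb hyT) (not_le.2 hy.2)
    have hscl : s ∈ closure W := by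
      refine closure_mono hsub ?_
      rw [closure_Ico hsx.ne]
      exact ⟨hsx.le, le_refl _⟩
    have hsfr : s ∈ frontier W := by
      rw [frontier, hWo.interior_eq]
      exact ⟨hscl, hsT.2⟩
    exact ⟨s, hsx, hsT.1.2, hfr s hsfr⟩

/-- The level-window pools. -/
def pool (f : ℝ → ℝ) (z : ℝ) (n m : ℕ) (s : Bool) : Set ℝ :=
  {y | |f y - f z| < 1 / (n + 1) ∧
    (if s then z < y ∧ y ≤ z + 1 / (m + 1) else z - 1 / (m + 1) ≤ y ∧ y < z)}

lemma pool_nonempty {f : ℝ → ℝ} (hf : IsPeripherallyContinuous f) (z : ℝ) (n m : ℕ)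
    (s : Bool) : (pool f z n m s).Nonempty := by
  have h1 : (0:ℝ) < 1 / (n + 1) := by positivity
  have h2 : (0:ℝ) < 1 / (m + 1) := by positivity
  obtain ⟨⟨a, ha1, ha2, ha3⟩, ⟨b, hb1, hb2, hb3⟩⟩ := approx_of_pc hf z h1 h2
  cases s
  · exact ⟨a, ha3, ⟨ha1, ha2⟩⟩
  · exact ⟨b, hb3, ⟨hb1, hb2⟩⟩

lemma iUnion_lt_continuum {ι : Type} [Countable ι] (A : ι → Set ℝ)
    (h : ∀ i, #(A i) < 𝔠) : #(⋃ i, A i) < 𝔠 := by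
  calc #(⋃ i, A i) ≤ Cardinal.sum (fun i => #(A i)) := mk_iUnion_le_sum_mk
    _ < Cardinal.prod (fun _ : ι => 𝔠) := sum_lt_prod _ _ h
    _ = 𝔠 ^ #ι := prod_const' ι 𝔠
    _ ≤ 𝔠 ^ ℵ₀ := by
        refine power_le_power_left continuum_ne_zero ?_
        exact Cardinal.mk_le_aleph0
    _ = 𝔠 := continuum_power_aleph0


section
variable (f : ℝ → ℝ)

lemma bad_right_small (n m : ℕ) :
    #{z : ℝ | #(pool f z n m true) < 𝔠} < 𝔠 := by
  classical
  set ε : ℝ := 1 / (n + 1) with hε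
  set hw : ℝ := 1 / (m + 1) with hh
  have hεpos : 0 < ε := by positivity
  have hhpos : 0 < hw := by positivity
  set G : Set ℝ := {z : ℝ | #(pool f z n m true) < 𝔠} with hG
  set G₂ : Set ℝ := {z ∈ G | ∀ d ∈ G, ¬(z - hw/2 < d ∧ d < z ∧ |f d - f z| < ε/2)} with hG2
  have hG2c : #G₂ ≤ ℵ₀ := by
    have hch : ∀ z : G₂, ∃ p : ℚ × ℚ × ℚ,
        (z:ℝ) - hw/2 < p.1 ∧ (p.1:ℝ) < z ∧
        f z - ε/2 < p.2.1 ∧ (p.2.1:ℝ) < f z ∧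
        f z < p.2.2 ∧ (p.2.2:ℝ) < f z + ε/2 := by
      intro z
      obtain ⟨p, hp1, hp2⟩ := exists_rat_btwn (show (z:ℝ) - hw/2 < z by linarith)
      obtain ⟨r, hr1, hr2⟩ := exists_rat_btwn (show f z - ε/2 < f z by linarith)
      obtain ⟨q, hq1, hq2⟩ := exists_rat_btwn (show f z < f z + ε/2 by linarith)
      exact ⟨⟨p, r, q⟩, hp1, hp2, hr1, hr2, hq1, hq2⟩
    choose F hF using hch
    have hinj : Function.Injective F := by
      intro z₁ z₂ hFe
      by_contra hne
      have key : ∀ w₁ w₂ : G₂, F w₁ = F w₂ → (w₁:ℝ) < w₂ → False := by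
        intro w₁ w₂ hFeq hlt
        obtain ⟨hp1, hp2, hr1, hr2, hq1, hq2⟩ := hF w₁
        obtain ⟨hp1', hp2', hr1', hr2', hq1', hq2'⟩ := hF w₂
        rw [hFeq] at hp1 hp2 hr1 hr2 hq1 hq2
        refine w₂.2.2 w₁ w₁.2.1 ⟨by linarith, hlt, ?_⟩
        rw [abs_sub_lt_iff]
        constructor <;> linarith
      rcases lt_trichotomy (z₁:ℝ) (z₂:ℝ) with hlt | heq | hgt
      · exact key z₁ z₂ hFe hlt
      · exact hne (Subtype.ext heq)
      · exact key z₂ z₁ hFe.symm hgt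
    calc #(G₂ : Set ℝ) ≤ #(ℚ × ℚ × ℚ) := mk_le_of_injective hinj
      _ ≤ ℵ₀ := mk_le_aleph0
  have hcov : #(G \ G₂ : Set ℝ) < 𝔠 := by
    set Γ : Set (ℝ × ℝ) := {p | p.1 ∈ G ∧ p.2 = f p.1} with hΓ
    obtain ⟨D, hDc, hDd⟩ := TopologicalSpace.exists_countable_dense ↥Γ
    have hcover : G \ G₂ ⊆ ⋃ γ : D, pool f ((γ : ℝ × ℝ).1) n m true := by
      intro z hz
      have hzG : z ∈ G := hz.1
      have hnot : ¬ (∀ d ∈ G, ¬(z - hw/2 < d ∧ d < z ∧ |f d - f z| < ε/2)) :=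
        fun hc => hz.2 ⟨hzG, hc⟩
      push_neg at hnot
      obtain ⟨d, hdG, hd1, hd2, hd3⟩ := hnot
      set O : Set (ℝ × ℝ) := Ioo (z - hw) z ×ˢ Ioo (f z - ε/2) (f z + ε/2) with hO
      have hOopen : IsOpen O := isOpen_Ioo.prod isOpen_Ioo
      have hd3' := abs_sub_lt_iff.1 hd3
      have hdO : ((d, f d) : ℝ × ℝ) ∈ O :=
        ⟨⟨by linarith, hd2⟩, ⟨by linarith [hd3'.2], by linarith [hd3'.1]⟩⟩
      have hdΓ : ((d, f d) : ℝ × ℝ) ∈ Γ := ⟨hdG, rfl⟩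
      have hmeet : ∃ γ ∈ D, (γ : ℝ × ℝ) ∈ O := by
        have hne : (Subtype.val ⁻¹' O : Set ↥Γ).Nonempty := ⟨⟨_, hdΓ⟩, hdO⟩
        have hop : IsOpen (Subtype.val ⁻¹' O : Set ↥Γ) := hOopen.preimage continuous_subtype_val
        obtain ⟨γ, hγD, hγO⟩ := hDd.exists_mem_open hop hne
        exact ⟨γ, hγD, hγO⟩
      obtain ⟨γ, hγD, hγO⟩ := hmeet
      refine mem_iUnion.2 ⟨⟨γ, hγD⟩, ?_⟩
      have hγf : (γ : ℝ × ℝ).2 = f (γ : ℝ × ℝ).1 := γ.2.2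
      obtain ⟨⟨hg1, hg2⟩, hg3⟩ := hγO
      rw [hγf] at hg3
      refine ⟨?_, ?_⟩
      · rw [abs_sub_lt_iff]
        constructor <;> [linarith [hg3.1]; linarith [hg3.2]]
      · simp only [if_true]
        exact ⟨hg2, by linarith⟩
    have : Countable ↥D := hDc.to_subtype
    refine lt_of_le_of_lt (mk_le_mk_of_subset hcover) ?_
    exact iUnion_lt_continuum _ (fun γ => (γ : ↥Γ).2.1)
  have hsplit : G ⊆ (G \ G₂) ∪ G₂ := by
    intro z hz
    by_cases h2 : z ∈ G₂
    · exact Or.inr h2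
    · exact Or.inl ⟨hz, h2⟩
  calc #(G : Set ℝ) ≤ #((G \ G₂) ∪ G₂ : Set ℝ) := mk_le_mk_of_subset hsplit
    _ ≤ #(G \ G₂ : Set ℝ) + #(G₂ : Set ℝ) := mk_union_le _ _
    _ < 𝔠 := add_lt_of_lt aleph0_le_continuum hcov (hG2c.trans_lt aleph0_lt_continuum)

lemma pool_false_eq (z : ℝ) (n m : ℕ) :
    pool f z n m false = (fun u : ℝ => -u) '' pool (fun x => f (-x)) (-z) n m true := by
  ext y
  simp only [pool, mem_setOf_eq, mem_image, if_true, if_false, Bool.false_eq_true, if_neg,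
    neg_neg]
  constructor
  · rintro ⟨h1, h2, h3⟩
    exact ⟨-y, ⟨by rwa [neg_neg], by constructor <;> linarith⟩, neg_neg y⟩
  · rintro ⟨u, ⟨h1, h2, h3⟩, rfl⟩
    exact ⟨h1, by linarith, by linarith⟩

lemma bad_left_small (n m : ℕ) :
    #{z : ℝ | #(pool f z n m false) < 𝔠} < 𝔠 := by
  have hkey : ∀ z : ℝ, #(pool f z n m false) = #(pool (fun x => f (-x)) (-z) n m true) := by
    intro z
    rw [pool_false_eq]
    exact mk_image_eq neg_injective
  have hset : {z : ℝ | #(pool f z n m false) < 𝔠} =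
      (fun u : ℝ => -u) '' {w : ℝ | #(pool (fun x => f (-x)) w n m true) < 𝔠} := by
    ext z
    simp only [mem_setOf_eq, mem_image]
    constructor
    · intro hz
      exact ⟨-z, by rwa [← hkey], neg_neg z⟩
    · rintro ⟨w, hw, rfl⟩
      rwa [hkey, neg_neg]
  rw [hset, mk_image_eq neg_injective]
  exact bad_right_small _ n m

def BadSet : Set ℝ := {z | ∃ n m s, #(pool f z n m s) < 𝔠}

lemma badSet_small : #(BadSet f) < 𝔠 := by
  have : BadSet f = ⋃ t : ℕ × ℕ × Bool, {z | #(pool f z t.1 t.2.1 t.2.2) < 𝔠} := by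
    ext z
    simp only [BadSet, mem_setOf_eq, mem_iUnion]
    exact ⟨fun ⟨n, m, s, h⟩ => ⟨⟨n, m, s⟩, h⟩, fun ⟨⟨n, m, s⟩, h⟩ => ⟨n, m, s, h⟩⟩
  rw [this]
  refine iUnion_lt_continuum _ (fun t => ?_)
  rcases t with ⟨n, m, s⟩
  cases s
  · exact bad_left_small f n m
  · exact bad_right_small f n m

noncomputable def wit (z : ℝ) (n m : ℕ) (s : Bool) : ℝ :=
  if h : (pool f z n m s).Nonempty then h.some else 0

lemma wit_mem {f : ℝ → ℝ} (hf : IsPeripherallyContinuous f) (z : ℝ) (n m : ℕ) (s : Bool) :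
    wit f z n m s ∈ pool f z n m s := by
  rw [wit, dif_pos (pool_nonempty hf z n m s)]
  exact (pool_nonempty hf z n m s).some_mem

noncomputable def witA (S : Set ℝ) (z : ℝ) (n m : ℕ) (s : Bool) : ℝ :=
  if h : (pool f z n m s \ S).Nonempty then h.some else wit f z n m s

lemma witA_mem {f : ℝ → ℝ} (hf : IsPeripherallyContinuous f) (S : Set ℝ) (z : ℝ) (n m : ℕ) (s : Bool) :
    witA f S z n m s ∈ pool f z n m s := by
  rw [witA]
  by_cases h : (pool f z n m s \ S).Nonempty
  · rw [dif_pos h]; exact h.some_mem.1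
  · rw [dif_neg h]; exact wit_mem hf z n m s

lemma witA_not_mem {f : ℝ → ℝ} {S : Set ℝ} {z : ℝ} (hz : z ∉ BadSet f) (hS : #S < 𝔠)
    (n m : ℕ) (s : Bool) : witA f S z n m s ∉ S := by
  have hpool : ¬ #(pool f z n m s) < 𝔠 := fun h => hz ⟨n, m, s, h⟩
  have hne : (pool f z n m s \ S).Nonempty := by
    rw [Set.diff_nonempty]
    intro hsub
    exact hpool (lt_of_le_of_lt (mk_le_mk_of_subset hsub) hS)
  rw [witA, dif_pos hne]
  exact hne.some_mem.2

/-- countable closure of `{x}` under `witA _ S`. -/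
def stageA (S : Set ℝ) (x : ℝ) : ℕ → Set ℝ
  | 0 => {x}
  | k + 1 => stageA S x k ∪
      ⋃ z ∈ stageA S x k, range (fun t : ℕ × ℕ × Bool => witA f S z t.1 t.2.1 t.2.2)

def cloA (S : Set ℝ) (x : ℝ) : Set ℝ := ⋃ k, stageA f S x k

lemma stageA_countable (S : Set ℝ) (x : ℝ) : ∀ k, (stageA f S x k).Countable := by
  intro k
  induction k with
  | zero => exact countable_singleton x
  | succ k ih => exact ih.union (ih.biUnion (fun z _ => countable_range _))

lemma cloA_countable (S : Set ℝ) (x : ℝ) : (cloA f S x).Countable :=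
  countable_iUnion (stageA_countable f S x)

lemma cloA_self (S : Set ℝ) (x : ℝ) : x ∈ cloA f S x :=
  mem_iUnion.2 ⟨0, rfl⟩

lemma cloA_closed (S : Set ℝ) (x : ℝ) {z : ℝ} (hz : z ∈ cloA f S x) (n m : ℕ) (s : Bool) :
    witA f S z n m s ∈ cloA f S x := by
  obtain ⟨k, hk⟩ := mem_iUnion.1 hz
  refine mem_iUnion.2 ⟨k + 1, Or.inr ?_⟩
  exact mem_biUnion hk ⟨⟨n, m, s⟩, rfl⟩

lemma cloA_avoid {S : Set ℝ} {x : ℝ} (hx : x ∉ S) (hBad : BadSet f ⊆ S) (hS : #S < 𝔠) :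
    ∀ y ∈ cloA f S x, y ∉ S := by
  have : ∀ k, ∀ y ∈ stageA f S x k, y ∉ S := by
    intro k
    induction k with
    | zero => intro y hy; rw [stageA, mem_singleton_iff] at hy; rwa [hy]
    | succ k ih =>
        intro y hy
        rcases hy with hy | hy
        · exact ih y hy
        · obtain ⟨z, hz, ⟨t, rfl⟩⟩ := by
            simpa only [mem_iUnion, mem_range] using hy
          exact witA_not_mem (fun hb => ih z hz (hBad hb)) hS _ _ _
  intro y hy
  obtain ⟨k, hk⟩ := mem_iUnion.1 hy
  exact this k y hk

/-- countable closure of the bad set under `wit`. -/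
def stage0 : ℕ → Set ℝ
  | 0 => BadSet f
  | k + 1 => stage0 k ∪ ⋃ z ∈ stage0 k, range (fun t : ℕ × ℕ × Bool => wit f z t.1 t.2.1 t.2.2)

def C0 : Set ℝ := ⋃ k, stage0 f k

lemma stage0_small : ∀ k, #(stage0 f k) < 𝔠 := by
  intro k
  induction k with
  | zero => exact badSet_small f
  | succ k ih =>
      refine lt_of_le_of_lt (mk_union_le _ _) (add_lt_of_lt aleph0_le_continuum ih ?_)
      have hb : #(⋃ z ∈ stage0 f k, range (fun t : ℕ × ℕ × Bool => wit f z t.1 t.2.1 t.2.2)) ≤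
          #(stage0 f k) * ℵ₀ := by
        refine le_trans (mk_biUnion_le _ _) ?_
        refine mul_le_mul' le_rfl ?_
        refine ciSup_le' (fun z => ?_)
        exact le_trans mk_range_le mk_le_aleph0
      refine lt_of_le_of_lt hb ?_
      exact mul_lt_of_lt aleph0_le_continuum ih aleph0_lt_continuum
lemma C0_small : #(C0 f) < 𝔠 := iUnion_lt_continuum _ (stage0_small f)
lemma badSet_subset_C0 : BadSet f ⊆ C0 f := fun z hz => mem_iUnion.2 ⟨0, hz⟩
lemma C0_closed {z : ℝ} (hz : z ∈ C0 f) (n m : ℕ) (s : Bool) : wit f z n m s ∈ C0 f := by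
  obtain ⟨k, hk⟩ := mem_iUnion.1 hz
  exact mem_iUnion.2 ⟨k + 1, Or.inr (mem_biUnion hk ⟨⟨n, m, s⟩, rfl⟩)⟩
/-- index type: the initial ordinal of the continuum. -/
abbrev II : Type := (Cardinal.continuum.ord).ToType

noncomputable def eR : II ≃ ℝ :=
  (Cardinal.eq.1 (by rw [mk_ord_toType, mk_real])).some

noncomputable def Cl : II → Set ℝ :=
  WellFoundedLT.fix
    (fun i rec =>
      @ite _ (eR i ∈ C0 f ∪ ⋃ j, ⋃ h : j < i, rec j h) (Classical.propDecidable _) ∅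
        (cloA f (C0 f ∪ ⋃ j, ⋃ h : j < i, rec j h) (eR i)))

def SS (i : II) : Set ℝ := C0 f ∪ ⋃ j, ⋃ _ : j < i, Cl f j

lemma Cl_eq (i : II) :
    Cl f i = if eR i ∈ SS f i then ∅ else cloA f (SS f i) (eR i) := by
  rw [Cl, WellFoundedLT.fix_eq]
  rfl

lemma Cl_countable (i : II) : (Cl f i).Countable := by
  rw [Cl_eq]
  split
  · exact countable_empty
  · exact cloA_countable f _ _

lemma SS_small (i : II) : #(SS f i) < 𝔠 := by
  have h1 : #(⋃ j, ⋃ _ : j < i, Cl f j) < 𝔠 := by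
    have he : (⋃ j, ⋃ _ : j < i, Cl f j) = ⋃ j ∈ Iio i, Cl f j := rfl
    rw [he]
    refine lt_of_le_of_lt (mk_biUnion_le _ _) ?_
    refine mul_lt_of_lt aleph0_le_continuum (mk_Iio_ord_toType i) ?_
    refine lt_of_le_of_lt (ciSup_le' (fun j => (Cl_countable f _).le_aleph0)) ?_
    exact aleph0_lt_continuum
  exact lt_of_le_of_lt (mk_union_le _ _) (add_lt_of_lt aleph0_le_continuum (C0_small f) h1)

lemma badSet_subset_SS (i : II) : BadSet f ⊆ SS f i :=
  fun z hz => Or.inl (badSet_subset_C0 f hz)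

lemma Cl_avoid_SS (i : II) : ∀ y ∈ Cl f i, y ∉ SS f i := by
  rw [Cl_eq]
  split
  · intro y hy; exact absurd hy (notMem_empty y)
  · next hnot =>
      exact cloA_avoid f hnot (badSet_subset_SS f i) (SS_small f i)

lemma Cl_subset_SS {j i : II} (h : j < i) : Cl f j ⊆ SS f i :=
  fun y hy => Or.inr (mem_iUnion.2 ⟨j, mem_iUnion.2 ⟨h, hy⟩⟩)

lemma C0_subset_SS (i : II) : C0 f ⊆ SS f i := fun _ hy => Or.inl hy

lemma Cl_disj_C0 (i : II) : ∀ y ∈ Cl f i, y ∉ C0 f :=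
  fun y hy hc => Cl_avoid_SS f i y hy (C0_subset_SS f i hc)

lemma Cl_disj {i j : II} (h : i ≠ j) : ∀ y, y ∈ Cl f i → y ∈ Cl f j → False := by
  rcases h.lt_or_gt with hlt | hlt
  · exact fun y hyi hyj => Cl_avoid_SS f j y hyj (Cl_subset_SS f hlt hyi)
  · exact fun y hyi hyj => Cl_avoid_SS f i y hyi (Cl_subset_SS f hlt hyj)

lemma cover (x : ℝ) : x ∈ C0 f ∨ ∃ i, x ∈ Cl f i := by
  set i := eR.symm x with hi
  have hx : eR i = x := Equiv.apply_symm_apply eR x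
  by_cases hmem : eR i ∈ SS f i
  · rw [hx] at hmem
    rcases hmem with hc | hc
    · exact Or.inl hc
    · obtain ⟨j, hj⟩ := mem_iUnion.1 hc
      obtain ⟨_, hj⟩ := mem_iUnion.1 hj
      exact Or.inr ⟨j, hj⟩
  · refine Or.inr ⟨i, ?_⟩
    rw [Cl_eq, if_neg hmem, ← hx]
    exact cloA_self f _ _

lemma Cl_witness {f : ℝ → ℝ} (hf : IsPeripherallyContinuous f) {i : II} {x : ℝ}
    (hx : x ∈ Cl f i) (n m : ℕ) (s : Bool) :
    witA f (SS f i) x n m s ∈ Cl f i ∧ witA f (SS f i) x n m s ∈ pool f x n m s := by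
  rw [Cl_eq] at hx
  split at hx
  · exact absurd hx (notMem_empty x)
  · next hnot =>
      rw [Cl_eq, if_neg hnot]
      exact ⟨cloA_closed f _ _ hx n m s, witA_mem hf _ x n m s⟩

noncomputable def Hcl (x : ℝ) : Set ℝ :=
  if x ∈ C0 f then C0 f else ⋃ i, ⋃ _ : x ∈ Cl f i, Cl f i

lemma Hcl_eq_C0 {x : ℝ} (hx : x ∈ C0 f) : Hcl f x = C0 f := if_pos hx

lemma Hcl_eq_Cl {x : ℝ} {i : II} (hx0 : x ∉ C0 f) (hx : x ∈ Cl f i) :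
    Hcl f x = Cl f i := by
  rw [Hcl, if_neg hx0]
  ext y
  simp only [mem_iUnion]
  constructor
  · rintro ⟨j, hj, hy⟩
    rcases eq_or_ne j i with rfl | hne
    · exact hy
    · exact absurd hx (fun hxi => Cl_disj f hne x hj hxi)
  · intro hy
    exact ⟨i, hx, hy⟩

lemma Hcl_self (x : ℝ) : x ∈ Hcl f x := by
  rcases cover f x with hx | ⟨i, hx⟩
  · rw [Hcl_eq_C0 f hx]; exact hx
  · by_cases hx0 : x ∈ C0 f
    · rw [Hcl_eq_C0 f hx0]; exact hx0
    · rw [Hcl_eq_Cl f hx0 hx]; exact hx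

lemma Hcl_mem_eq {x y : ℝ} (hy : y ∈ Hcl f x) : Hcl f y = Hcl f x := by
  by_cases hx0 : x ∈ C0 f
  · rw [Hcl_eq_C0 f hx0] at hy ⊢
    exact Hcl_eq_C0 f hy
  · rcases cover f x with hx | ⟨i, hx⟩
    · exact absurd hx hx0
    · rw [Hcl_eq_Cl f hx0 hx] at hy ⊢
      exact Hcl_eq_Cl f (Cl_disj_C0 f i y hy) hy

lemma Hcl_witness {f : ℝ → ℝ} (hf : IsPeripherallyContinuous f) (x : ℝ) (n m : ℕ) (s : Bool) :
    ∃ y ∈ pool f x n m s, Hcl f y = Hcl f x := by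
  rcases cover f x with hx | ⟨i, hx⟩
  · refine ⟨wit f x n m s, wit_mem hf x n m s, ?_⟩
    exact Hcl_mem_eq f ((Hcl_eq_C0 f hx).symm ▸ C0_closed f hx n m s)
  · obtain ⟨h1, h2⟩ := Cl_witness hf hx n m s
    refine ⟨witA f (SS f i) x n m s, h2, ?_⟩
    refine Hcl_mem_eq f ?_
    rw [Hcl_eq_Cl f (Cl_disj_C0 f i x hx) hx]
    exact h1

lemma Hcl_range : 𝔠 ≤ #(range (Hcl f)) := by
  set A : Set II := {i | (Cl f i).Nonempty} with hA
  have hAle : #A ≤ #(range (Hcl f)) := by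
    have hmem : ∀ i : A, Cl f (i : II) ∈ range (Hcl f) := by
      rintro ⟨i, x, hx⟩
      exact ⟨x, Hcl_eq_Cl f (Cl_disj_C0 f i x hx) hx⟩
    refine mk_le_of_injective (f := fun i : A => (⟨Cl f (i : II), hmem i⟩ : range (Hcl f))) ?_
    rintro ⟨i, hi⟩ ⟨j, hj⟩ hij
    simp only [Subtype.mk_eq_mk] at hij ⊢
    by_contra hne
    obtain ⟨x, hx⟩ := hi
    exact Cl_disj f hne x hx (hij ▸ hx)
  refine le_trans ?_ hAle
  by_contra hlt
  push_neg at hlt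
  have hcov : (univ : Set ℝ) ⊆ C0 f ∪ ⋃ i ∈ A, Cl f i := by
    intro x _
    rcases cover f x with hx | ⟨i, hx⟩
    · exact Or.inl hx
    · exact Or.inr (mem_biUnion ⟨x, hx⟩ hx)
  have hsmall : #(C0 f ∪ ⋃ i ∈ A, Cl f i : Set ℝ) < 𝔠 := by
    refine lt_of_le_of_lt (mk_union_le _ _) (add_lt_of_lt aleph0_le_continuum (C0_small f) ?_)
    refine lt_of_le_of_lt (mk_biUnion_le _ _) ?_
    refine mul_lt_of_lt aleph0_le_continuum hlt ?_
    exact lt_of_le_of_lt (ciSup_le' (fun j => (Cl_countable f _).le_aleph0)) aleph0_lt_continuum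
  have := lt_of_le_of_lt (mk_le_mk_of_subset hcov) hsmall
  rw [mk_univ_real] at this
  exact absurd this (lt_irrefl _)

end

section master
variable (k : ℝ → ℝ) (H : ℝ → Set ℝ)

/-- the subspace `{c • k + φ ∘ H}`. -/
noncomputable def Psi : (ℝ × (Set ℝ → ℝ)) →ₗ[ℝ] (ℝ → ℝ) where
  toFun p := p.1 • k + p.2 ∘ H
  map_add' p q := by
    funext x
    simp only [Prod.fst_add, Prod.snd_add, Pi.add_apply, Pi.smul_apply, Function.comp_apply,
      smul_eq_mul, add_smul]
    ring
  map_smul' c p := by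
    funext x
    simp only [Prod.smul_fst, Prod.smul_snd, Pi.add_apply, Pi.smul_apply, Function.comp_apply,
      smul_eq_mul, RingHom.id_apply]
    ring

noncomputable def Msub : Submodule ℝ (ℝ → ℝ) := LinearMap.range (Psi k H)

lemma Psi_apply (c : ℝ) (φ : Set ℝ → ℝ) (x : ℝ) :
    Psi k H (c, φ) x = c * k x + φ (H x) := rfl

lemma mem_Msub_self : k ∈ Msub k H := by
  refine ⟨(1, 0), ?_⟩
  funext x
  rw [Psi_apply]
  simp

def WitProp : Prop :=
  ∀ x : ℝ, ∀ ε δ : ℝ, 0 < ε → 0 < δ →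
    (∃ a, x - δ < a ∧ a < x ∧ |k a - k x| < ε ∧ H a = H x) ∧
    (∃ b, x < b ∧ b < x + δ ∧ |k b - k x| < ε ∧ H b = H x)

lemma Msub_subset_pc (hwit : WitProp k H) :
    (Msub k H : Set (ℝ → ℝ)) ⊆ {g | IsPeripherallyContinuous g} := by
  rintro g ⟨⟨c, φ⟩, rfl⟩
  intro x U V hU hV hxU hgV
  obtain ⟨δ, hδpos, hδ⟩ := Metric.isOpen_iff.1 hU x hxU
  obtain ⟨ε, hεpos, hε⟩ := Metric.isOpen_iff.1 hV _ hgV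
  have hεc : 0 < ε / (|c| + 1) := by positivity
  obtain ⟨⟨a, ha1, ha2, ha3, ha4⟩, ⟨b, hb1, hb2, hb3, hb4⟩⟩ :=
    hwit x (ε / (|c| + 1)) (δ / 2) hεc (by linarith)
  refine ⟨Set.Ioo a b, isOpen_Ioo, ⟨ha2, hb1⟩, ?_, ?_⟩
  · intro y hy
    refine hδ ?_
    rw [Metric.mem_ball, Real.dist_eq]
    rw [abs_sub_lt_iff]
    constructor <;> [linarith [hy.2]; linarith [hy.1]]
  · rw [frontier_Ioo (lt_trans ha2 hb1)]
    rintro _ ⟨y, hy, rfl⟩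
    have hkey : ∀ w : ℝ, w ≠ x → |k w - k x| < ε / (|c| + 1) → H w = H x →
        Psi k H (c, φ) w ∈ V := by
      intro w _ hw1 hw2
      refine hε ?_
      rw [Metric.mem_ball, Real.dist_eq, Psi_apply, Psi_apply, hw2]
      have h1 : c * k w + φ (H x) - (c * k x + φ (H x)) = c * (k w - k x) := by ring
      rw [h1, abs_mul]
      have h2 : ε / (|c| + 1) * (|c| + 1) = ε := by
        field_simp
      nlinarith [abs_nonneg c, abs_nonneg (k w - k x)]
    rcases hy with rfl | hy
    · exact hkey y ha2.ne ha3 ha4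
    · rw [Set.mem_singleton_iff] at hy
      subst hy
      exact hkey y hb1.ne' hb3 hb4

lemma Msub_rank (hH : 𝔠 ≤ #(range H)) :
    2 ^ 𝔠 ≤ Module.rank ℝ (Msub k H) := by
  classical
  have hinf : Infinite ↥(range H) := by
    rw [Cardinal.infinite_iff]
    exact le_trans aleph0_le_continuum hH
  -- the embedding of `range H → ℝ` into `Msub k H`
  have hmem : ∀ ψ : ↥(range H) → ℝ,
      (fun x : ℝ => ψ ⟨H x, mem_range_self x⟩) ∈ Msub k H := by
    intro ψ
    refine ⟨(0, fun A => if h : A ∈ range H then ψ ⟨A, h⟩ else 0), ?_⟩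
    funext x
    rw [Psi_apply, dif_pos (mem_range_self x)]
    ring
  set Θ : (↥(range H) → ℝ) →ₗ[ℝ] ↥(Msub k H) :=
    { toFun := fun ψ => ⟨fun x : ℝ => ψ ⟨H x, mem_range_self x⟩, hmem ψ⟩
      map_add' := fun ψ ψ' => rfl
      map_smul' := fun c ψ => rfl } with hΘ
  have hinj : Function.Injective Θ := by
    intro ψ ψ' h
    funext b
    obtain ⟨x, hx⟩ := b.2
    have hb : b = ⟨H x, mem_range_self x⟩ := Subtype.ext hx.symm
    rw [hb]
    have := congrFun (congrArg (fun v : ↥(Msub k H) => (v : ℝ → ℝ)) h) x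
    exact this
  have h1 : Module.rank ℝ (↥(range H) → ℝ) ≤ Module.rank ℝ ↥(Msub k H) :=
    Θ.rank_le_of_injective hinj
  refine le_trans ?_ h1
  rw [rank_fun_infinite]
  rw [← Cardinal.power_def ℝ ↥(range H), mk_real]
  calc (2 : Cardinal) ^ 𝔠 ≤ 𝔠 ^ 𝔠 := by
        refine power_le_power_right ?_
        exact le_trans (le_of_lt (nat_lt_aleph0 2)) aleph0_le_continuum
    _ ≤ 𝔠 ^ #(range H) := power_le_power_left continuum_ne_zero hH

end master

/-- the ℚ-coset partition. -/
def qQ : ℝ → Set ℝ := fun x => {y | ∃ r : ℚ, y = x + r}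

lemma qQ_shift (x : ℝ) (r : ℚ) : qQ (x + r) = qQ x := by
  ext z
  constructor
  · rintro ⟨r', rfl⟩
    exact ⟨r + r', by push_cast; ring⟩
  · rintro ⟨r', rfl⟩
    exact ⟨r' - r, by push_cast; ring⟩

lemma qQ_self (x : ℝ) : x ∈ qQ x := ⟨0, by simp⟩

lemma qQ_countable (x : ℝ) : (qQ x).Countable := by
  have : qQ x = range (fun r : ℚ => x + r) := by
    ext z
    simp only [qQ, mem_setOf_eq, mem_range]
    exact ⟨fun ⟨r, hr⟩ => ⟨r, hr.symm⟩, fun ⟨r, hr⟩ => ⟨r, hr.symm⟩⟩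
  rw [this]
  exact countable_range _

lemma qQ_range : 𝔠 ≤ #(range qQ) := by
  by_contra hlt
  push_neg at hlt
  have hcov : (univ : Set ℝ) ⊆ ⋃ b ∈ range qQ, {y | qQ y = b} := by
    intro x _
    exact mem_biUnion (mem_range_self x) rfl
  have hfib : ∀ b ∈ range qQ, ({y | qQ y = b} : Set ℝ).Countable := by
    rintro _ ⟨x, rfl⟩
    refine (qQ_countable x).mono ?_
    intro y hy
    have : y ∈ qQ y := qQ_self y
    rwa [hy] at this
  have hsmall : #(⋃ b ∈ range qQ, {y | qQ y = b} : Set ℝ) < 𝔠 := by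
    refine lt_of_le_of_lt (mk_biUnion_le _ _) ?_
    refine mul_lt_of_lt aleph0_le_continuum hlt ?_
    refine lt_of_le_of_lt (ciSup_le' (fun b => (hfib b b.2).le_aleph0)) aleph0_lt_continuum
  have := lt_of_le_of_lt (mk_le_mk_of_subset hcov) hsmall
  rw [mk_univ_real] at this
  exact absurd this (lt_irrefl _)

lemma exp_wit (t : ℝ) : WitProp (fun x => Real.exp (t * x)) qQ := by
  intro x ε δ hε hδ
  have hcont : Continuous (fun y : ℝ => Real.exp (t * y)) :=
    Real.continuous_exp.comp (continuous_const.mul continuous_id)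
  obtain ⟨γ, hγpos, hγ⟩ := Metric.continuousAt_iff.1 hcont.continuousAt (ε := ε) hε
  set ρ := min γ δ with hρ
  have hρpos : 0 < ρ := lt_min hγpos hδ
  constructor
  · obtain ⟨r, hr1, hr2⟩ := exists_rat_btwn (show -ρ < (0:ℝ) by linarith)
    refine ⟨x + r, by have := min_le_right γ δ; linarith, by linarith, ?_, qQ_shift x r⟩
    have : dist (x + (r:ℝ)) x < γ := by
      rw [Real.dist_eq]
      have h1 : |x + (r:ℝ) - x| = |(r:ℝ)| := by ring_nf
      rw [h1, abs_lt]
      constructor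
      · have := min_le_left γ δ; linarith
      · linarith [hγpos]
    have := hγ this
    rwa [Real.dist_eq] at this
  · obtain ⟨r, hr1, hr2⟩ := exists_rat_btwn (show (0:ℝ) < ρ by linarith)
    refine ⟨x + r, by linarith, by have := min_le_right γ δ; linarith, ?_, qQ_shift x r⟩
    have : dist (x + (r:ℝ)) x < γ := by
      rw [Real.dist_eq]
      have h1 : |x + (r:ℝ) - x| = |(r:ℝ)| := by ring_nf
      rw [h1, abs_lt]
      constructor
      · linarith [hγpos]
      · have := min_le_left γ δ; linarith
    have := hγ this
    rwa [Real.dist_eq] at this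

lemma Msub_exp_inj {t s : ℝ} (ht : 0 < t) (hs : 0 < s)
    (heq : Msub (fun x => Real.exp (t * x)) qQ = Msub (fun x => Real.exp (s * x)) qQ) :
    t = s := by
  by_contra hne
  have hmem : (fun x => Real.exp (t * x)) ∈ Msub (fun x => Real.exp (s * x)) qQ := by
    rw [← heq]
    exact mem_Msub_self _ _
  obtain ⟨⟨c, φ⟩, hcφ⟩ := hmem
  have hfun : ∀ x : ℝ, Real.exp (t * x) = c * Real.exp (s * x) + φ (qQ x) := by
    intro x
    have := congrFun hcφ x
    rw [Psi_apply] at this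
    exact this.symm
  set h : ℝ → ℝ := fun x => Real.exp (t * x) - c * Real.exp (s * x) with hh
  have hper : ∀ r : ℚ, h r = h 0 := by
    intro r
    have h1 := hfun 0
    have h2 := hfun ((0:ℝ) + r)
    rw [qQ_shift 0 r] at h2
    simp only [hh, zero_add] at *
    linarith
  have hcont : Continuous h := by
    refine Continuous.sub ?_ ?_
    · exact Real.continuous_exp.comp (continuous_const.mul continuous_id)
    · exact (Real.continuous_exp.comp (continuous_const.mul continuous_id)).const_smul c
  have hconst : ∀ x : ℝ, h x = h 0 := by
    have hd : Dense (range (fun r : ℚ => (r:ℝ))) := Rat.denseRange_cast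
    have heqon : Set.EqOn h (fun _ => h 0) (range (fun r : ℚ => (r:ℝ))) := by
      rintro _ ⟨r, rfl⟩
      exact hper r
    have := Continuous.ext_on hd hcont continuous_const heqon
    exact fun x => congrFun this x
  set a := Real.exp t with ha'
  set b := Real.exp s with hb'
  have ha : 1 < a := by rw [ha']; exact Real.one_lt_exp_iff.2 ht
  have hb : 1 < b := by rw [hb']; exact Real.one_lt_exp_iff.2 hs
  have h0 : h 0 = 1 - c := by simp [hh]
  have h1 : a - c * b = 1 - c := by
    have := hconst 1
    simp only [hh, mul_one, mul_zero, Real.exp_zero] at this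
    rw [ha', hb']
    linarith
  have h2 : a ^ 2 - c * b ^ 2 = 1 - c := by
    have := hconst 2
    simp only [hh, mul_zero, Real.exp_zero] at this
    have hta : Real.exp (t * 2) = a ^ 2 := by
      rw [ha', show t * 2 = t + t by ring, Real.exp_add, sq]
    have htb : Real.exp (s * 2) = b ^ 2 := by
      rw [hb', show s * 2 = s + s by ring, Real.exp_add, sq]
    rw [hta, htb] at this
    linarith
  have e1 : a - 1 = c * (b - 1) := by linarith
  have e2 : a ^ 2 - 1 = c * b ^ 2 - c := by linarith
  have e3 : (a - 1) * (b + 1) = c * (b - 1) * (b + 1) := by rw [e1]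
  have e4 : (a - 1) * (b + 1) = a ^ 2 - 1 := by nlinarith [e3]
  have e5 : (a - 1) * (b + 1) = (a - 1) * (a + 1) := by nlinarith [e4]
  have e6 : b + 1 = a + 1 := by
    have hane : a - 1 ≠ 0 := by linarith
    exact mul_left_cancel₀ hane e5
  have hab : a = b := by linarith
  exact hne (Real.exp_injective (ha' ▸ hb' ▸ hab))

lemma Hcl_wit {f : ℝ → ℝ} (hf : IsPeripherallyContinuous f) : WitProp f (Hcl f) := by
  intro x ε δ hε hδ
  obtain ⟨n, hn⟩ := exists_nat_one_div_lt hε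
  obtain ⟨m, hm⟩ := exists_nat_one_div_lt hδ
  constructor
  · obtain ⟨y, hy, hHy⟩ := Hcl_witness hf x n m false
    have hy2 : x - 1 / (m + 1) ≤ y := hy.2.1
    refine ⟨y, by linarith, hy.2.2, lt_trans hy.1 hn, hHy⟩
  · obtain ⟨y, hy, hHy⟩ := Hcl_witness hf x n m true
    have hy2 : y ≤ x + 1 / (m + 1) := hy.2.2
    refine ⟨y, hy.2.1, by linarith, lt_trans hy.1 hn, hHy⟩

theorem property_B :
    ∃ 𝓑 : Set (Submodule ℝ (ℝ → ℝ)),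
      Cardinal.continuum ≤ #𝓑 ∧
      (∀ B ∈ 𝓑, (B : Set (ℝ → ℝ)) ⊆ {f | IsPeripherallyContinuous f} ∪ {0} ∧
        2 ^ Cardinal.continuum ≤ Module.rank ℝ B) ∧
      {f | IsPeripherallyContinuous f} ∪ {0} = ⋃ B ∈ 𝓑, (B : Set (ℝ → ℝ)) := by
  classical
  set 𝓑 : Set (Submodule ℝ (ℝ → ℝ)) :=
    {B | (∃ f : ℝ → ℝ, IsPeripherallyContinuous f ∧ B = Msub f (Hcl f)) ∨
         (∃ t : ℝ, 0 < t ∧ B = Msub (fun x => Real.exp (t * x)) qQ)} with h𝓑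
  have hprops : ∀ B ∈ 𝓑, (B : Set (ℝ → ℝ)) ⊆ {f | IsPeripherallyContinuous f} ∧
      2 ^ Cardinal.continuum ≤ Module.rank ℝ B := by
    rintro B (⟨f, hf, rfl⟩ | ⟨t, ht, rfl⟩)
    · exact ⟨Msub_subset_pc f (Hcl f) (Hcl_wit hf), Msub_rank f (Hcl f) (Hcl_range f)⟩
    · exact ⟨Msub_subset_pc _ qQ (exp_wit t), Msub_rank _ qQ qQ_range⟩
  refine ⟨𝓑, ?_, ?_, ?_⟩
  · -- cardinality
    have hJ : Function.Injective (fun t : ↥(Set.Ioi (0:ℝ)) =>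
        (⟨Msub (fun x => Real.exp ((t:ℝ) * x)) qQ,
          Or.inr ⟨(t:ℝ), t.2, rfl⟩⟩ : ↥𝓑)) := by
      intro t s hts
      have h1 : Msub (fun x => Real.exp ((t:ℝ) * x)) qQ =
          Msub (fun x => Real.exp ((s:ℝ) * x)) qQ := congrArg Subtype.val hts
      exact Subtype.ext (Msub_exp_inj t.2 s.2 h1)
    have h2 : #(Set.Ioi (0:ℝ)) ≤ #(↥𝓑) := mk_le_of_injective hJ
    rwa [mk_Ioi_real] at h2
  · intro B hB
    exact ⟨subset_trans (hprops B hB).1 subset_union_left, (hprops B hB).2⟩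
  · ext g
    simp only [Set.mem_union, Set.mem_setOf_eq, Set.mem_singleton_iff, Set.mem_iUnion,
      SetLike.mem_coe]
    constructor
    · rintro (hg | rfl)
      · exact ⟨Msub g (Hcl g), Or.inl ⟨g, hg, rfl⟩, mem_Msub_self g (Hcl g)⟩
      · refine ⟨Msub (fun x => Real.exp (1 * x)) qQ, Or.inr ⟨1, one_pos, rfl⟩, ?_⟩
        exact Submodule.zero_mem _
    · rintro ⟨B, hB, hgB⟩
      exact Or.inl ((hprops B hB).1 hgB)

end PCB

/-- **Corollary.** The family `PC(ℝ)` of peripherally continuous functions has property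
`B(2^𝔠, 𝔠)`: `PC(ℝ) ∪ {0}` is the union of at least `𝔠` many linear subspaces of `ℝ^ℝ`,
each contained in `PC(ℝ) ∪ {0}` and each of dimension at least `2^𝔠`. -/
theorem peripherallyContinuous_property_B :
    ∃ 𝓑 : Set (Submodule ℝ (ℝ → ℝ)),
      Cardinal.continuum ≤ #𝓑 ∧
      (∀ B ∈ 𝓑, (B : Set (ℝ → ℝ)) ⊆ {f | IsPeripherallyContinuous f} ∪ {0} ∧
        2 ^ Cardinal.continuum ≤ Module.rank ℝ B) ∧
      {f | IsPeripherallyContinuous f} ∪ {0} = ⋃ B ∈ 𝓑, (B : Set (ℝ → ℝ)) :=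
  PCB.property_B
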